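/- Let 𝐧 be a strictly increasing partition and j ∈ supp(𝐧). Then the symmetric difference of supp(𝐧) with the integer interval [j, τ⁺_𝐧(j)] has the same cardinality as supp(𝐧), and likewise the symmetric difference of supp(𝐧) with the integer interval [j, τ⁻_𝐧(j)] has the same cardinality as supp(𝐧). -/

import Mathlib

/-- The position function of a strictly increasing partition (represented by its
finite support `S ⊆ ℤ`): `ι_S(j_s) = s` (1-based). -/
def iotaF (S : Finset ℤ) (x : ℤ) : ℕ := (S.filter (fun y => y ≤ x)).card

/-- `σ⁺_S(j)`: the largest `j' ∈ S` with `j' ≥ j` such that `j'' - j < 2(ι(j'') - ι(j))`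
for all `j'' ∈ S` with `j < j'' ≤ j'`. -/
def sigmaP (S : Finset ℤ) (j : ℤ) : ℤ :=
  WithBot.unbotD j (Finset.max (S.filter (fun j' => j ≤ j' ∧
    ∀ j'' ∈ S, j < j'' → j'' ≤ j' →
      j'' - j < 2 * ((iotaF S j'' : ℤ) - (iotaF S j : ℤ)))))

/-- `σ⁻_S(j)`: the smallest `j' ∈ S` with `j' ≤ j` such that `j - j'' < 2(ι(j) - ι(j''))`
for all `j'' ∈ S` with `j' ≤ j'' < j`. -/
def sigmaM (S : Finset ℤ) (j : ℤ) : ℤ :=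
  WithTop.untopD j (Finset.min (S.filter (fun j' => j' ≤ j ∧
    ∀ j'' ∈ S, j' ≤ j'' → j'' < j →
      j - j'' < 2 * ((iotaF S j : ℤ) - (iotaF S j'' : ℤ)))))

/-- `τ⁺_S(j) = j + 2(ι(σ⁺(j)) - ι(j)) + 1`. -/
def tauP (S : Finset ℤ) (j : ℤ) : ℤ :=
  j + 2 * ((iotaF S (sigmaP S j) : ℤ) - (iotaF S j : ℤ)) + 1

/-- `τ⁻_S(j) = j + 2(ι(σ⁻(j)) - ι(j)) - 1`. -/
def tauM (S : Finset ℤ) (j : ℤ) : ℤ :=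
  j + 2 * ((iotaF S (sigmaM S j) : ℤ) - (iotaF S j : ℤ)) - 1

/-- The set of integers between `a` and `b` inclusive, regardless of order. -/
noncomputable def itv (a b : ℤ) : Finset ℤ := Finset.Icc (min a b) (max a b)

/-- The symmetric difference `(S \ T) ∪ (T \ S)`. -/
def symmd (S T : Finset ℤ) : Finset ℤ := (S \ T) ∪ (T \ S)

lemma iota_mono (S : Finset ℤ) {a b : ℤ} (h : a ≤ b) : iotaF S a ≤ iotaF S b := by
  apply Finset.card_le_card
  intro x hx
  simp only [Finset.mem_filter] at *
  exact ⟨hx.1, hx.2.trans h⟩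

lemma iota_lt (S : Finset ℤ) {a b : ℤ} (ha : a ∈ S) (h : b < a) : iotaF S b < iotaF S a := by
  apply Finset.card_lt_card
  constructor
  · intro x hx
    simp only [Finset.mem_filter] at *
    exact ⟨hx.1, by omega⟩
  · intro hsub
    have : a ∈ S.filter (fun y => y ≤ b) := hsub (Finset.mem_filter.mpr ⟨ha, le_refl a⟩)
    simp only [Finset.mem_filter] at this
    omega

lemma iota_pred (S : Finset ℤ) {a : ℤ} (ha : a ∈ S) : iotaF S a = iotaF S (a-1) + 1 := by
  have he : S.filter (fun y => y ≤ a) = insert a (S.filter (fun y => y ≤ a - 1)) := by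
    ext x
    simp only [Finset.mem_insert, Finset.mem_filter]
    constructor
    · rintro ⟨hx, hle⟩
      rcases eq_or_lt_of_le hle with rfl | h
      · exact Or.inl rfl
      · exact Or.inr ⟨hx, by omega⟩
    · rintro (rfl | ⟨hx, h⟩)
      · exact ⟨ha, le_refl _⟩
      · exact ⟨hx, by omega⟩
  rw [iotaF, iotaF, he, Finset.card_insert_of_notMem (by simp only [Finset.mem_filter]; omega)]

lemma count_Icc (S : Finset ℤ) {a b : ℤ} (h : a ≤ b) :
    (S.filter (fun x => a ≤ x ∧ x ≤ b)).card + iotaF S (a-1) = iotaF S b := by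
  rw [iotaF, iotaF, ← Finset.card_union_of_disjoint]
  · congr 1
    ext x
    simp only [Finset.mem_union, Finset.mem_filter]
    constructor
    · rintro (⟨hx, h1, h2⟩ | ⟨hx, h1⟩) <;> exact ⟨by assumption, by omega⟩
    · rintro ⟨hx, hle⟩
      by_cases hc : a ≤ x
      · exact Or.inl ⟨hx, hc, hle⟩
      · exact Or.inr ⟨hx, by omega⟩
  · rw [Finset.disjoint_left]
    rintro x hx hx'
    simp only [Finset.mem_filter] at hx hx'
    omega

lemma max_spec (F : Finset ℤ) (h : F.Nonempty) (d : ℤ) :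
    WithBot.unbotD d F.max ∈ F ∧ ∀ x ∈ F, x ≤ WithBot.unbotD d F.max := by
  obtain ⟨m, hm⟩ := Finset.max_of_nonempty h
  rw [hm]
  simp only [WithBot.unbotD_coe]
  refine ⟨Finset.mem_of_max hm, fun x hx => ?_⟩
  have := Finset.le_max hx
  rw [hm] at this
  exact_mod_cast this

lemma min_spec (F : Finset ℤ) (h : F.Nonempty) (d : ℤ) :
    WithTop.untopD d F.min ∈ F ∧ ∀ x ∈ F, WithTop.untopD d F.min ≤ x := by
  obtain ⟨m, hm⟩ := Finset.min_of_nonempty h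
  rw [hm]
  simp only [WithTop.untopD_coe]
  refine ⟨Finset.mem_of_min hm, fun x hx => ?_⟩
  have := Finset.min_le hx
  rw [hm] at this
  exact_mod_cast this

lemma sigmaP_spec (S : Finset ℤ) (j : ℤ) (hj : j ∈ S) :
    sigmaP S j ∈ S ∧ j ≤ sigmaP S j ∧
    (∀ j'' ∈ S, j < j'' → j'' ≤ sigmaP S j →
      j'' - j < 2 * ((iotaF S j'' : ℤ) - (iotaF S j : ℤ))) ∧
    (∀ x ∈ S, j ≤ x →
      (∀ j'' ∈ S, j < j'' → j'' ≤ x → j'' - j < 2 * ((iotaF S j'' : ℤ) - (iotaF S j : ℤ))) →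
      x ≤ sigmaP S j) := by
  have hne : (S.filter (fun j' => j ≤ j' ∧ ∀ j'' ∈ S, j < j'' → j'' ≤ j' →
      j'' - j < 2 * ((iotaF S j'' : ℤ) - (iotaF S j : ℤ)))).Nonempty :=
    ⟨j, Finset.mem_filter.mpr ⟨hj, le_refl j, fun j'' _ h2 h3 => absurd h3 (by omega)⟩⟩
  obtain ⟨hmem, hmax⟩ := max_spec _ hne j
  rw [Finset.mem_filter] at hmem
  exact ⟨hmem.1, hmem.2.1, hmem.2.2,
    fun x hx h1 h2 => hmax x (Finset.mem_filter.mpr ⟨hx, h1, h2⟩)⟩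

lemma sigmaM_spec (S : Finset ℤ) (j : ℤ) (hj : j ∈ S) :
    sigmaM S j ∈ S ∧ sigmaM S j ≤ j ∧
    (∀ j'' ∈ S, sigmaM S j ≤ j'' → j'' < j →
      j - j'' < 2 * ((iotaF S j : ℤ) - (iotaF S j'' : ℤ))) ∧
    (∀ x ∈ S, x ≤ j →
      (∀ j'' ∈ S, x ≤ j'' → j'' < j → j - j'' < 2 * ((iotaF S j : ℤ) - (iotaF S j'' : ℤ))) →
      sigmaM S j ≤ x) := by
  have hne : (S.filter (fun j' => j' ≤ j ∧ ∀ j'' ∈ S, j' ≤ j'' → j'' < j →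
      j - j'' < 2 * ((iotaF S j : ℤ) - (iotaF S j'' : ℤ)))).Nonempty :=
    ⟨j, Finset.mem_filter.mpr ⟨hj, le_refl j, fun j'' _ h2 h3 => absurd h3 (by omega)⟩⟩
  obtain ⟨hmem, hmin⟩ := min_spec _ hne j
  rw [Finset.mem_filter] at hmem
  exact ⟨hmem.1, hmem.2.1, hmem.2.2,
    fun x hx h1 h2 => hmin x (Finset.mem_filter.mpr ⟨hx, h1, h2⟩)⟩

lemma card_symmd (S T : Finset ℤ) (h : T.card = 2 * (S ∩ T).card) :
    (symmd S T).card = S.card := by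
  have h1 : (S \ T).card + (S ∩ T).card = S.card := Finset.card_sdiff_add_card_inter S T
  have h2 : (T \ S).card + (T ∩ S).card = T.card := Finset.card_sdiff_add_card_inter T S
  have h3 : (T ∩ S).card = (S ∩ T).card := by rw [Finset.inter_comm]
  have h4 : Disjoint (S \ T) (T \ S) := by
    rw [Finset.disjoint_left]
    intro a ha hb
    simp only [Finset.mem_sdiff] at ha hb
    tauto
  rw [symmd, Finset.card_union_of_disjoint h4]
  omega

lemma inter_Icc_card (S : Finset ℤ) (a b : ℤ) :
    (S ∩ Finset.Icc a b) = S.filter (fun x => a ≤ x ∧ x ≤ b) := by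
  ext x
  simp only [Finset.mem_inter, Finset.mem_Icc, Finset.mem_filter]

/-- For a strictly increasing partition `𝐧` (with support `S`) and
`j ∈ S`, the symmetric difference of `S` with the integer interval `[j, τ⁺(j)]`
has the same cardinality as `S`, and likewise for `[j, τ⁻(j)]`. -/
theorem card_symmd_interval (S : Finset ℤ) (j : ℤ) (hj : j ∈ S) :
    (symmd S (itv j (tauP S j))).card = S.card ∧
    (symmd S (itv j (tauM S j))).card = S.card := by
  constructor
  · -- plus case
    obtain ⟨hσS, hjσ, hprop, hmax⟩ := sigmaP_spec S j hj
    set σ := sigmaP S j with hσdef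
    have hpq : iotaF S j ≤ iotaF S σ := iota_mono S hjσ
    have htau : tauP S j = j + 2 * ((iotaF S σ : ℤ) - (iotaF S j : ℤ)) + 1 := rfl
    have hjt : j + 1 ≤ tauP S j := by rw [htau]; omega
    have hστ : σ ≤ tauP S j := by
      rcases eq_or_lt_of_le hjσ with h | h
      · rw [htau, ← h]; omega
      · have := hprop σ hσS h (le_refl σ)
        rw [htau]; omega
    have hempty : ∀ x ∈ S, j ≤ x → x ≤ tauP S j → x ≤ σ := by
      intro x hxS hjx hxt
      apply hmax x hxS hjx
      intro j'' hj''S h1 h2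
      by_cases hc : j'' ≤ σ
      · exact hprop j'' hj''S h1 hc
      · push_neg at hc
        have h3 : iotaF S σ < iotaF S j'' := iota_lt S hj''S hc
        have h4 : j'' ≤ tauP S j := le_trans h2 hxt
        rw [htau] at h4
        omega
    have hitv : itv j (tauP S j) = Finset.Icc j (tauP S j) := by
      rw [itv, min_eq_left (by omega), max_eq_right (by omega)]
    have hfilter : S.filter (fun x => j ≤ x ∧ x ≤ tauP S j)
        = S.filter (fun x => j ≤ x ∧ x ≤ σ) := by
      ext x
      simp only [Finset.mem_filter]
      constructor
      · rintro ⟨hx, h1, h2⟩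
        exact ⟨hx, h1, hempty x hx h1 h2⟩
      · rintro ⟨hx, h1, h2⟩
        exact ⟨hx, h1, h2.trans hστ⟩
    have hcount := count_Icc S hjσ
    have hpredj := iota_pred S hj
    have hcard1 : (S ∩ itv j (tauP S j)).card + iotaF S (j-1) = iotaF S σ := by
      rw [hitv, inter_Icc_card, hfilter]
      exact hcount
    apply card_symmd
    rw [hitv, Int.card_Icc]
    rw [hitv] at hcard1
    omega
  · -- minus case
    obtain ⟨hσS, hσj, hprop, hmin⟩ := sigmaM_spec S j hj
    set σ := sigmaM S j with hσdef
    have hpq : iotaF S σ ≤ iotaF S j := iota_mono S hσj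
    have htau : tauM S j = j + 2 * ((iotaF S σ : ℤ) - (iotaF S j : ℤ)) - 1 := rfl
    have hjt : tauM S j ≤ j - 1 := by rw [htau]; omega
    have hστ : tauM S j ≤ σ := by
      rcases eq_or_lt_of_le hσj with h | h
      · rw [htau, h]; omega
      · have := hprop σ hσS (le_refl σ) h
        rw [htau]; omega
    have hempty : ∀ x ∈ S, tauM S j ≤ x → x ≤ j → σ ≤ x := by
      intro x hxS htx hxj
      apply hmin x hxS hxj
      intro j'' hj''S h1 h2
      by_cases hc : σ ≤ j''
      · exact hprop j'' hj''S hc h2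
      · push_neg at hc
        have h3 : iotaF S j'' < iotaF S σ := iota_lt S hσS hc
        have h4 : tauM S j ≤ j'' := le_trans htx h1
        rw [htau] at h4
        omega
    have hitv : itv j (tauM S j) = Finset.Icc (tauM S j) j := by
      rw [itv, min_eq_right (by omega), max_eq_left (by omega)]
    have hfilter : S.filter (fun x => tauM S j ≤ x ∧ x ≤ j)
        = S.filter (fun x => σ ≤ x ∧ x ≤ j) := by
      ext x
      simp only [Finset.mem_filter]
      constructor
      · rintro ⟨hx, h1, h2⟩
        exact ⟨hx, hempty x hx h1 h2, h2⟩
      · rintro ⟨hx, h1, h2⟩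
        exact ⟨hx, hστ.trans h1, h2⟩
    have hcount := count_Icc S hσj
    have hpredσ := iota_pred S hσS
    have hcard1 : (S ∩ itv j (tauM S j)).card + iotaF S (σ-1) = iotaF S j := by
      rw [hitv, inter_Icc_card, hfilter]
      exact hcount
    apply card_symmd
    rw [hitv, Int.card_Icc]
    rw [hitv] at hcard1
    omega
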